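/- If G is a K_h-minor-free directed graph, then the set system of directed balls B_G = {B(v,r) : v ∈ V, r ∈ ℝ}, where B(v,r) = {u : d(v,u) ≤ r}, has VC dimension at most h − 1. -/

import Mathlib

/-- A simple path from `u` to `v` in the digraph with adjacency relation `A`. -/
def IsSPath {V : Type*} (A : V → V → Prop) (u v : V) (l : List V) : Prop :=
  l.Chain' A ∧ l.head? = some u ∧ l.getLast? = some v ∧ l.Nodup

/-- The (additive) weight of a path. -/
def pathWeight {V : Type*} (w : V → V → ℝ) (l : List V) : ℝ :=
  ((l.zip l.tail).map fun p => w p.1 p.2).sum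

/-- Shortest-path distance in a weighted digraph, valued in `EReal`
(`⊤` when `v` is unreachable from `u`). -/
noncomputable def ddist {V : Type*} (A : V → V → Prop) (w : V → V → ℝ) (u v : V) : EReal :=
  sInf {x : EReal | ∃ l, IsSPath A u v l ∧ x = (pathWeight w l : ℝ)}

/-- `G` contains `K_d` as a minor. -/
def HasCompleteMinor {V : Type*} (G : SimpleGraph V) (d : ℕ) : Prop :=
  ∃ B : Fin d → Set V,
    (∀ i, (B i).Nonempty) ∧
    (∀ i, (G.induce (B i)).Connected) ∧
    (∀ i j, i ≠ j → Disjoint (B i) (B j)) ∧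
    (∀ i j, i ≠ j → ∃ a ∈ B i, ∃ b ∈ B j, G.Adj a b)

/-- A set system `F` (VC-)shatters `A` if every subset of `A` is `A ∩ S`, `S ∈ F`. -/
def VCShatters {α : Type*} (F : Set (Set α)) (A : Set α) : Prop :=
  ∀ B ⊆ A, ∃ S ∈ F, A ∩ S = B

/-- VC dimension of a set system. -/
noncomputable def VCdim {α : Type*} (F : Set (Set α)) : ℕ :=
  sSup {d | ∃ A : Finset α, A.card = d ∧ VCShatters F ↑A}

namespace VCb
variable {V : Type*} {A : V → V → Prop} {w : V → V → ℝ}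

@[simp] lemma pw_nil : pathWeight w [] = 0 := rfl
@[simp] lemma pw_single (a : V) : pathWeight w [a] = 0 := rfl
@[simp] lemma pw_cons_cons (a b : V) (l : List V) :
    pathWeight w (a :: b :: l) = w a b + pathWeight w (b :: l) := rfl

lemma pw_split (l1 l2 : List V) (z : V) :
    pathWeight w (l1 ++ z :: l2) = pathWeight w (l1 ++ [z]) + pathWeight w (z :: l2) := by
  induction l1 with
  | nil => simp
  | cons a t ih =>
    cases t with
    | nil => simp [pw_cons_cons]
    | cons b t2 =>
      simp only [List.cons_append, pw_cons_cons] at *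
      rw [ih]; ring

lemma pw_nonneg (hw : ∀ a b, A a b → 0 < w a b) :
    ∀ {l : List V}, l.Chain' A → 0 ≤ pathWeight w l
  | [], _ => le_refl _
  | [a], _ => le_refl _
  | a :: b :: t, hc => by
    rw [pw_cons_cons]
    have h1 := List.isChain_cons_cons.mp hc
    have := pw_nonneg hw h1.2
    have := hw a b h1.1
    linarith

lemma chain'_prefix {l1 l2 : List V} {z : V} (hc : (l1 ++ z :: l2).Chain' A) :
    (l1 ++ [z]).Chain' A := by
  unfold List.Chain' at hc ⊢
  rw [List.isChain_append] at hc ⊢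
  exact ⟨hc.1, List.isChain_singleton z, by simpa using hc.2.2⟩

lemma chain'_suffix {l1 l2 : List V} {z : V} (hc : (l1 ++ z :: l2).Chain' A) :
    (z :: l2).Chain' A :=
  (List.isChain_append.mp hc).2.1

lemma head?_pre (l1 l2 l3 : List V) (z : V) :
    (l1 ++ z :: l2).head? = (l1 ++ z :: l3).head? := by
  cases l1 <;> simp

lemma shortcut (hw : ∀ a b, A a b → 0 < w a b) :
    ∀ (n : ℕ) (l : List V), l.length ≤ n → l.Chain' A → ∀ u v : V,
      l.head? = some u → l.getLast? = some v →
      ∃ l', IsSPath A u v l' ∧ pathWeight w l' ≤ pathWeight w l ∧ ∀ x ∈ l', x ∈ l := by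
  intro n
  induction n with
  | zero =>
    intro l hl _ u v hh _
    rw [Nat.le_zero, List.length_eq_zero_iff] at hl
    subst hl; simp at hh
  | succ n ih =>
    intro l hlen hc u v hh hlast
    match l with
    | [] => simp at hh
    | u' :: t =>
      have hu : u' = u := by simpa using hh
      subst hu
      by_cases hmem : u' ∈ t
      · obtain ⟨m1, m2, rfl⟩ := List.append_of_mem hmem
        have hsplit : u' :: (m1 ++ u' :: m2) = (u' :: m1) ++ u' :: m2 := by simp
        rw [hsplit] at hc hlast hlen ⊢
        have hc2 : (u' :: m2).Chain' A := chain'_suffix hc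
        have hlast2 : (u' :: m2).getLast? = some v := by
          rwa [List.getLast?_append_cons] at hlast
        have hlen2 : (u' :: m2).length ≤ n := by
          simp only [List.length_append, List.length_cons] at hlen ⊢; omega
        obtain ⟨l', hsp, hle, hsub⟩ := ih (u' :: m2) hlen2 hc2 u' v rfl hlast2
        refine ⟨l', hsp, ?_, fun x hx => by simp [hsub x hx]⟩
        rw [pw_split]
        have := pw_nonneg hw (chain'_prefix (l2 := m2) hc)
        linarith
      · match t with
        | [] =>
          have hv : u' = v := by simpa using hlast
          subst hv
          exact ⟨[u'], ⟨List.isChain_singleton u', rfl, rfl, List.nodup_singleton u'⟩,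
            le_refl _, fun x hx => hx⟩
        | b :: t2 =>
          have hAc := List.isChain_cons_cons.mp hc
          have hlast2 : (b :: t2).getLast? = some v := by
            rwa [List.getLast?_cons_cons] at hlast
          have hlen2 : (b :: t2).length ≤ n := by
            simp only [List.length_cons] at hlen ⊢; omega
          obtain ⟨l', hsp, hle, hsub⟩ := ih (b :: t2) hlen2 hAc.2 b v rfl hlast2
          obtain ⟨hc', hh', hl', hnd'⟩ := hsp
          match l' with
          | [] => simp at hh'
          | b' :: rest =>
            have hb : b' = b := by simpa using hh'
            subst hb
            refine ⟨u' :: b' :: rest, ⟨List.isChain_cons_cons.mpr ⟨hAc.1, hc'⟩, rfl, ?_, ?_⟩, ?_, ?_⟩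
            · rwa [List.getLast?_cons_cons]
            · exact List.nodup_cons.mpr ⟨fun hx => hmem (hsub u' hx), hnd'⟩
            · rw [pw_cons_cons, pw_cons_cons]; linarith
            · intro x hx
              rcases List.mem_cons.mp hx with rfl | hx
              · exact List.mem_cons_self
              · exact List.mem_cons_of_mem _ (hsub x hx)


section DDist
variable [Fintype V]

lemma ddist_le {u v : V} {l : List V} (hsp : IsSPath A u v l) :
    ddist A w u v ≤ ((pathWeight w l : ℝ) : EReal) :=
  sInf_le ⟨l, hsp, rfl⟩

lemma ddist_le_walk (hw : ∀ a b, A a b → 0 < w a b) {u v : V} {l : List V}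
    (hc : l.Chain' A) (hh : l.head? = some u) (hl : l.getLast? = some v) :
    ddist A w u v ≤ ((pathWeight w l : ℝ) : EReal) := by
  obtain ⟨l', hsp, hle, -⟩ := shortcut hw l.length l (le_refl _) hc u v hh hl
  exact le_trans (ddist_le hsp) (by exact_mod_cast hle)

lemma ddist_nonneg (hw : ∀ a b, A a b → 0 < w a b) (u v : V) :
    (0 : EReal) ≤ ddist A w u v := by
  apply le_sInf
  rintro x ⟨l, hsp, rfl⟩
  exact_mod_cast pw_nonneg hw hsp.1

lemma ddist_ne_bot (hw : ∀ a b, A a b → 0 < w a b) (u v : V) : ddist A w u v ≠ ⊥ :=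
  fun h => by simpa [h] using ddist_nonneg hw u v

lemma ddist_achieve {u v : V} (h : ddist A w u v ≠ ⊤) :
    ∃ l, IsSPath A u v l ∧ ((pathWeight w l : ℝ) : EReal) = ddist A w u v := by
  set S := {x : EReal | ∃ l, IsSPath A u v l ∧ x = (pathWeight w l : ℝ)} with hS
  have hfin : S.Finite := by
    have : S ⊆ (fun l : List V => ((pathWeight w l : ℝ) : EReal)) ''
        {l : List V | l.length ≤ Fintype.card V} := by
      rintro x ⟨l, hsp, rfl⟩
      exact ⟨l, hsp.2.2.2.length_le_card, rfl⟩
    exact Set.Finite.subset ((List.finite_length_le V (Fintype.card V)).image _) this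
  have hne : S.Nonempty := by
    by_contra hemp
    rw [Set.not_nonempty_iff_eq_empty] at hemp
    exact h (by simp [ddist, ← hS, hemp])
  have := hne.csInf_mem hfin
  obtain ⟨l, hsp, hx⟩ := this
  exact ⟨l, hsp, by rw [← hx]; rfl⟩

lemma ddist_self_le (v : V) : ddist A w v v ≤ (0 : EReal) := by
  have := ddist_le (A := A) (w := w) (u := v) (v := v) (l := [v])
    ⟨List.isChain_singleton v, rfl, rfl, List.nodup_singleton v⟩
  simpa using this

lemma ddist_pos (hw : ∀ a b, A a b → 0 < w a b) {u v : V} (hne : u ≠ v) :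
    (0 : EReal) < ddist A w u v := by
  by_cases htop : ddist A w u v = ⊤
  · rw [htop]; exact EReal.zero_lt_top
  obtain ⟨l, ⟨hc, hh, hl, hnd⟩, hach⟩ := ddist_achieve (A := A) (w := w) htop
  rw [← hach]
  match l with
  | [] => simp at hh
  | [a] =>
    exfalso; apply hne
    have h1 : a = u := by simpa using hh
    have h2 : a = v := by simpa using hl
    rw [← h1, h2]
  | a :: b :: t =>
    have h1 := List.isChain_cons_cons.mp hc
    have : (0 : ℝ) < pathWeight w (a :: b :: t) := by
      rw [pw_cons_cons]
      have := hw a b h1.1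
      have := pw_nonneg hw h1.2
      linarith
    exact_mod_cast this

/-- Walking a path prefix then a shortest path: triangle-type bound. -/
lemma ddist_step (hw : ∀ a b, A a b → 0 < w a b) {l1 l2 : List V} {y z : V}
    (hc : (l1 ++ z :: l2).Chain' A) (hh : (l1 ++ z :: l2).head? = some y) (v' : V)
    (hne : ddist A w z v' ≠ ⊤) :
    ddist A w y v' ≤ ((pathWeight w (l1 ++ [z]) : ℝ) : EReal) + ddist A w z v' := by
  obtain ⟨m, ⟨mc, mh, ml, mnd⟩, hach⟩ := ddist_achieve (A := A) (w := w) hne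
  match m with
  | [] => simp at mh
  | z' :: m2 =>
    have hz : z' = z := by simpa using mh
    subst hz
    have hc' : (l1 ++ z' :: m2).Chain' A := by
      unfold List.Chain' at hc ⊢
      rw [List.isChain_append] at hc ⊢
      exact ⟨hc.1, mc, by simpa using hc.2.2⟩
    have hh' : (l1 ++ z' :: m2).head? = some y := by
      rw [head?_pre l1 m2 l2 z']; exact hh
    have hl' : (l1 ++ z' :: m2).getLast? = some v' := by
      rw [List.getLast?_append_cons]; exact ml
    have := ddist_le_walk hw hc' hh' hl'
    rw [pw_split l1 m2 z'] at this
    rw [← hach, ← EReal.coe_add]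
    exact this

end DDist

section Cells
variable [Fintype V] {d : ℕ}

/-- Voronoi cell of the `i`-th site w.r.t. directed distances *to* the sites. -/
def cell (A : V → V → Prop) (w : V → V → ℝ) (x : Fin d → V) (i : Fin d) : Set V :=
  {y | ddist A w y (x i) ≠ ⊤ ∧ (∀ k, ddist A w y (x i) ≤ ddist A w y (x k)) ∧
    ∀ k, ddist A w y (x k) = ddist A w y (x i) → i ≤ k}

variable {x : Fin d → V}

lemma x_mem_cell (hw : ∀ a b, A a b → 0 < w a b) (hx : Function.Injective x) (i : Fin d) :
    x i ∈ cell A w x i := by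
  have h0 : ddist A w (x i) (x i) ≤ 0 := ddist_self_le (x i)
  have hpos : ∀ k, k ≠ i → (0 : EReal) < ddist A w (x i) (x k) := fun k hk =>
    ddist_pos hw (fun he => hk (hx he.symm))
  refine ⟨fun ht => by simp [ht] at h0, fun k => ?_, fun k hk => ?_⟩
  · rcases eq_or_ne k i with rfl | hk
    · exact le_refl _
    · exact le_trans h0 (le_of_lt (hpos k hk))
  · rcases eq_or_ne k i with rfl | hne
    · exact le_refl _
    · exact absurd (lt_of_le_of_lt (hk ▸ h0) (hpos k hne)) (lt_irrefl _)

lemma cell_disjoint (i j : Fin d) (hij : i ≠ j) : Disjoint (cell A w x i) (cell A w x j) := by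
  rw [Set.disjoint_left]
  rintro y ⟨-, hi2, hi3⟩ ⟨-, hj2, hj3⟩
  have h1 := le_antisymm (hi2 j) (hj2 i)
  exact hij (le_antisymm (hi3 j h1.symm) (hj3 i h1))

/-- Vertices of a shortest path to `x i` starting in `cell i` stay in `cell i`. -/
lemma cell_closed (hw : ∀ a b, A a b → 0 < w a b) {y : V} {i : Fin d}
    (hy : y ∈ cell A w x i) {l : List V} (hsp : IsSPath A y (x i) l)
    (hlw : ((pathWeight w l : ℝ) : EReal) = ddist A w y (x i)) {z : V} (hz : z ∈ l) :
    z ∈ cell A w x i := by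
  obtain ⟨l1, l2, rfl⟩ := List.append_of_mem hz
  obtain ⟨hc, hh, hl, hnd⟩ := hsp
  set p := pathWeight w (l1 ++ [z]) with hp
  set s := pathWeight w (z :: l2) with hs
  have hps : pathWeight w (l1 ++ z :: l2) = p + s := pw_split l1 l2 z
  have hsufsp : IsSPath A z (x i) (z :: l2) :=
    ⟨chain'_suffix hc, rfl, by rw [← List.getLast?_append_cons l1 z l2]; exact hl,
      hnd.sublist (List.sublist_append_right l1 (z :: l2))⟩
  have hzi_le : ddist A w z (x i) ≤ ((s : ℝ) : EReal) := ddist_le hsufsp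
  have hzi_ne : ddist A w z (x i) ≠ ⊤ := fun ht => by simp [ht] at hzi_le
  -- the step bound: for any target v', ddist y v' ≤ p + ddist z v'
  have hstep : ∀ k : Fin d, ddist A w z (x k) ≠ ⊤ →
      ddist A w y (x k) ≤ ((p : ℝ) : EReal) + ddist A w z (x k) := fun k hk =>
    ddist_step hw hc hh (x k) hk
  have hyi : ddist A w y (x i) = ((p + s : ℝ) : EReal) := by rw [← hlw, hps]
  refine ⟨hzi_ne, fun k => ?_, fun k hk => ?_⟩
  · by_cases htop : ddist A w z (x k) = ⊤
    · rw [htop]; exact le_top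
    · -- real representations
      set ρ := (ddist A w z (x k)).toReal with hρ
      have hcoe : ((ρ : ℝ) : EReal) = ddist A w z (x k) :=
        EReal.coe_toReal htop (ddist_ne_bot hw z (x k))
      by_contra hlt
      push_neg at hlt
      have h1 : ddist A w y (x k) ≤ ((p + ρ : ℝ) : EReal) := by
        rw [EReal.coe_add, hcoe]; exact hstep k htop
      have h2 : ddist A w y (x i) ≤ ddist A w y (x k) := hy.2.1 k
      have h3 : ((p + s : ℝ) : EReal) ≤ ((p + ρ : ℝ) : EReal) := by
        rw [← hyi]; exact le_trans h2 h1
      have h4 : (ρ : EReal) < (s : EReal) := lt_of_lt_of_le (hcoe ▸ hlt) hzi_le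
      rw [EReal.coe_le_coe_iff] at h3
      rw [EReal.coe_lt_coe_iff] at h4
      linarith
  · -- tie case
    have hne : ddist A w z (x k) ≠ ⊤ := fun ht => hzi_ne (by rw [← hk, ht])
    have h1 : ddist A w y (x k) ≤ ((p : ℝ) : EReal) + ddist A w z (x k) := hstep k hne
    rw [hk] at h1
    have h2 : ((p : ℝ) : EReal) + ddist A w z (x i) ≤ ((p + s : ℝ) : EReal) := by
      rw [EReal.coe_add]
      exact add_le_add_right hzi_le _
    have h3 : ddist A w y (x k) ≤ ddist A w y (x i) := le_trans h1 (le_trans h2 hyi.symm.le)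
    exact hy.2.2 k (le_antisymm h3 (hy.2.1 k))

/-- Vertices of a shortest path from a ball center to `x i`, where the ball contains only
sites `x i`, `x j`, lie in `cell i ∪ cell j`. -/
lemma ball_cover (hw : ∀ a b, A a b → 0 < w a b) {c : V} {r : ℝ} {i j : Fin d}
    (hi : ddist A w c (x i) ≤ ((r : ℝ) : EReal))
    (hfar : ∀ k, k ≠ i → k ≠ j → ((r : ℝ) : EReal) < ddist A w c (x k))
    {l : List V} (hsp : IsSPath A c (x i) l)
    (hlw : ((pathWeight w l : ℝ) : EReal) = ddist A w c (x i)) {z : V} (hz : z ∈ l) :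
    z ∈ cell A w x i ∪ cell A w x j := by
  obtain ⟨l1, l2, rfl⟩ := List.append_of_mem hz
  obtain ⟨hc, hh, hl, hnd⟩ := hsp
  set p := pathWeight w (l1 ++ [z]) with hp
  set s := pathWeight w (z :: l2) with hs
  have hps : pathWeight w (l1 ++ z :: l2) = p + s := pw_split l1 l2 z
  have hsufsp : IsSPath A z (x i) (z :: l2) :=
    ⟨chain'_suffix hc, rfl, by rw [← List.getLast?_append_cons l1 z l2]; exact hl,
      hnd.sublist (List.sublist_append_right l1 (z :: l2))⟩
  have hzi_le : ddist A w z (x i) ≤ ((s : ℝ) : EReal) := ddist_le hsufsp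
  have hzi_ne : ddist A w z (x i) ≠ ⊤ := fun ht => by simp [ht] at hzi_le
  have hci : ddist A w c (x i) = ((p + s : ℝ) : EReal) := by rw [← hlw, hps]
  have hpr : p + s ≤ r := by
    have := hci ▸ hi
    exact_mod_cast this
  -- strict comparison with all other sites
  have hstrict : ∀ k, k ≠ i → k ≠ j → ddist A w z (x i) < ddist A w z (x k) := by
    intro k hki hkj
    by_cases htop : ddist A w z (x k) = ⊤
    · rw [htop]; exact lt_of_le_of_lt hzi_le (EReal.coe_lt_top s)
    · set ρ := (ddist A w z (x k)).toReal with hρ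
      have hcoe : ((ρ : ℝ) : EReal) = ddist A w z (x k) :=
        EReal.coe_toReal htop (ddist_ne_bot hw z (x k))
      have h1 : ddist A w c (x k) ≤ ((p + ρ : ℝ) : EReal) := by
        rw [EReal.coe_add, hcoe]; exact ddist_step hw hc hh (x k) htop
      have h2 : ((r : ℝ) : EReal) < ((p + ρ : ℝ) : EReal) := lt_of_lt_of_le (hfar k hki hkj) h1
      rw [EReal.coe_lt_coe_iff] at h2
      have hsρ : s < ρ := by linarith
      calc ddist A w z (x i) ≤ ((s : ℝ) : EReal) := hzi_le
        _ < ((ρ : ℝ) : EReal) := by exact_mod_cast hsρ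
        _ = ddist A w z (x k) := hcoe
  -- now decide which of the two cells z belongs to
  rcases lt_trichotomy (ddist A w z (x i)) (ddist A w z (x j)) with hlt | heq | hgt
  · left
    refine ⟨hzi_ne, fun k => ?_, fun k hk => ?_⟩
    · rcases eq_or_ne k i with rfl | hki
      · exact le_refl _
      rcases eq_or_ne k j with rfl | hkj
      · exact le_of_lt hlt
      · exact le_of_lt (hstrict k hki hkj)
    · rcases eq_or_ne k i with rfl | hki
      · exact le_refl _
      rcases eq_or_ne k j with rfl | hkj
      · exact absurd hk (ne_of_gt hlt)
      · exact absurd hk (ne_of_gt (hstrict k hki hkj))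
  · rcases le_or_gt i j with hij | hji
    · left
      refine ⟨hzi_ne, fun k => ?_, fun k hk => ?_⟩
      · rcases eq_or_ne k i with rfl | hki
        · exact le_refl _
        rcases eq_or_ne k j with rfl | hkj
        · exact le_of_eq heq
        · exact le_of_lt (hstrict k hki hkj)
      · rcases eq_or_ne k i with rfl | hki
        · exact le_refl _
        rcases eq_or_ne k j with rfl | hkj
        · exact hij
        · exact absurd hk (ne_of_gt (hstrict k hki hkj))
    · right
      have hji' : j ≤ i := le_of_lt hji
      refine ⟨by rw [← heq]; exact hzi_ne, fun k => ?_, fun k hk => ?_⟩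
      · rcases eq_or_ne k j with rfl | hkj
        · exact le_refl _
        rcases eq_or_ne k i with rfl | hki
        · exact le_of_eq heq.symm
        · exact le_of_lt (heq ▸ hstrict k hki hkj)
      · rcases eq_or_ne k j with rfl | hkj
        · exact le_refl _
        rcases eq_or_ne k i with rfl | hki
        · exact hji'
        · exact absurd hk (ne_of_gt (heq ▸ hstrict k hki hkj))
  · right
    have hzj_le : ddist A w z (x j) ≤ ((s : ℝ) : EReal) := le_trans (le_of_lt hgt) hzi_le
    have hzj_ne : ddist A w z (x j) ≠ ⊤ := fun ht => by simp [ht] at hzj_le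
    refine ⟨hzj_ne, fun k => ?_, fun k hk => ?_⟩
    · rcases eq_or_ne k j with rfl | hkj
      · exact le_refl _
      rcases eq_or_ne k i with rfl | hki
      · exact le_of_lt hgt
      · exact lt_of_lt_of_le hgt (le_of_lt (hstrict k hki hkj)) |>.le
    · rcases eq_or_ne k j with rfl | hkj
      · exact le_refl _
      rcases eq_or_ne k i with rfl | hki
      · exact absurd hk (ne_of_gt hgt)
      · exact absurd hk (ne_of_gt (lt_trans hgt (hstrict k hki hkj)))
end Cells

section Graph

lemma reach_in (S : Set V) :
    ∀ (l : List V), l.Chain' A → l.Nodup → (∀ z ∈ l, z ∈ S) →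
      ∀ u v (hu : u ∈ S) (hv : v ∈ S), l.head? = some u → l.getLast? = some v →
      ((SimpleGraph.fromRel A).induce S).Reachable ⟨u, hu⟩ ⟨v, hv⟩ := by
  intro l
  induction l with
  | nil => intro _ _ _ u v _ _ hh _; simp at hh
  | cons a t ih =>
    intro hc hnd hS u v hu hv hh hl
    have ha : a = u := by simpa using hh
    subst ha
    cases t with
    | nil =>
      have : a = v := by simpa using hl
      subst this
      exact SimpleGraph.Reachable.refl _
    | cons b t2 =>
      have hcc := List.isChain_cons_cons.mp hc
      have hab : a ≠ b := by
        intro hEq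
        exact (List.nodup_cons.mp hnd).1 (hEq ▸ List.mem_cons_self)
      have hbS : b ∈ S := hS b (List.mem_cons_of_mem _ (List.mem_cons_self))
      have hadj : ((SimpleGraph.fromRel A).induce S).Adj ⟨a, hu⟩ ⟨b, hbS⟩ := by
        simp only [SimpleGraph.comap_adj, Function.Embedding.coe_subtype,
          SimpleGraph.fromRel_adj]
        exact ⟨hab, Or.inl hcc.1⟩
      have hl2 : (b :: t2).getLast? = some v := by rwa [List.getLast?_cons_cons] at hl
      exact (hadj.reachable).trans
        (ih hcc.2 (List.nodup_cons.mp hnd).2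
          (fun z hz => hS z (List.mem_cons_of_mem _ hz)) b v hbS hv rfl hl2)

lemma cross (p : V → Prop) :
    ∀ (l : List V), l.Chain' A → ∀ u v, l.head? = some u → l.getLast? = some v →
      p u → ¬ p v → ∃ a b, A a b ∧ a ∈ l ∧ b ∈ l ∧ p a ∧ ¬ p b := by
  intro l
  induction l with
  | nil => intro _ u v hh _ _ _; simp at hh
  | cons a t ih =>
    intro hc u v hh hl hpu hpv
    have ha : a = u := by simpa using hh
    subst ha
    cases t with
    | nil =>
      have : a = v := by simpa using hl
      exact absurd (this ▸ hpu) hpv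
    | cons b t2 =>
      have hcc := List.isChain_cons_cons.mp hc
      have hl2 : (b :: t2).getLast? = some v := by rwa [List.getLast?_cons_cons] at hl
      by_cases hpb : p b
      · obtain ⟨a', b', hA, ha', hb', hpa', hpb'⟩ := ih hcc.2 b v rfl hl2 hpb hpv
        exact ⟨a', b', hA, List.mem_cons_of_mem _ ha', List.mem_cons_of_mem _ hb', hpa', hpb'⟩
      · exact ⟨a, b, hcc.1, List.mem_cons_self,
          List.mem_cons_of_mem _ (List.mem_cons_self), hpu, hpb⟩

end Graph

section Minor
variable [Fintype V] {d : ℕ} {x : Fin d → V}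

lemma cell_connected (hw : ∀ a b, A a b → 0 < w a b) (hx : Function.Injective x) (i : Fin d) :
    ((SimpleGraph.fromRel A).induce (cell A w x i)).Connected := by
  have hxi := x_mem_cell (w := w) hw hx i
  rw [SimpleGraph.connected_iff]
  constructor
  · intro a b
    have key : ∀ (y : V) (hy : y ∈ cell A w x i),
        ((SimpleGraph.fromRel A).induce (cell A w x i)).Reachable ⟨y, hy⟩ ⟨x i, hxi⟩ := by
      intro y hy
      obtain ⟨l, hsp, hlw⟩ := ddist_achieve (A := A) (w := w) hy.1
      have hcl : ∀ z ∈ l, z ∈ cell A w x i := fun z hz => cell_closed hw hy hsp hlw hz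
      exact reach_in (cell A w x i) l hsp.1 hsp.2.2.2 hcl y (x i) hy hxi hsp.2.1 hsp.2.2.1
    obtain ⟨a, ha⟩ := a
    obtain ⟨b, hb⟩ := b
    exact (key a ha).trans (key b hb).symm
  · exact ⟨⟨x i, hxi⟩⟩

lemma shattered_minor (hw : ∀ a b, A a b → 0 < w a b) (hx : Function.Injective x)
    (hball : ∀ i j : Fin d, i ≠ j → ∃ (c : V) (r : ℝ),
      ddist A w c (x i) ≤ ((r : ℝ) : EReal) ∧ ddist A w c (x j) ≤ ((r : ℝ) : EReal) ∧
      ∀ k, k ≠ i → k ≠ j → ((r : ℝ) : EReal) < ddist A w c (x k)) :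
    HasCompleteMinor (SimpleGraph.fromRel A) d := by
  refine ⟨cell A w x, fun i => ⟨x i, x_mem_cell hw hx i⟩, cell_connected hw hx,
    fun i j hij => cell_disjoint i j hij, ?_⟩
  intro i j hij
  obtain ⟨c, r, hi, hj, hfar⟩ := hball i j hij
  have hfar' : ∀ k, k ≠ j → k ≠ i → ((r : ℝ) : EReal) < ddist A w c (x k) :=
    fun k h1 h2 => hfar k h2 h1
  have hine : ddist A w c (x i) ≠ ⊤ := fun ht => by simp [ht] at hi
  have hjne : ddist A w c (x j) ≠ ⊤ := fun ht => by simp [ht] at hj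
  obtain ⟨li, hspi, hlwi⟩ := ddist_achieve (A := A) (w := w) hine
  obtain ⟨lj, hspj, hlwj⟩ := ddist_achieve (A := A) (w := w) hjne
  have hcovi : ∀ z ∈ li, z ∈ cell A w x i ∪ cell A w x j :=
    fun z hz => ball_cover hw hi hfar hspi hlwi hz
  have hcovj : ∀ z ∈ lj, z ∈ cell A w x j ∪ cell A w x i :=
    fun z hz => ball_cover hw hj hfar' hspj hlwj hz
  have hcmem : c ∈ li := List.mem_of_mem_head? (by rw [hspi.2.1]; rfl)
  rcases hcovi c hcmem with hci | hcj
  · -- c in cell i : walk along lj to x j, cross out of cell i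
    have hxj_not : x j ∉ cell A w x i := fun hmem =>
      (Set.disjoint_left.mp (cell_disjoint i j hij)) hmem (x_mem_cell hw hx j)
    obtain ⟨a, b, hA, haL, hbL, hpa, hpb⟩ :=
      cross (· ∈ cell A w x i) lj hspj.1 c (x j) hspj.2.1 hspj.2.2.1 hci hxj_not
    have hbj : b ∈ cell A w x j := by
      rcases hcovj b hbL with h | h
      · exact h
      · exact absurd h hpb
    refine ⟨a, hpa, b, hbj, ?_⟩
    rw [SimpleGraph.fromRel_adj]
    exact ⟨fun hEq => hpb (hEq ▸ hpa), Or.inl hA⟩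
  · -- c in cell j : walk along li to x i, cross out of cell j
    have hxi_not : x i ∉ cell A w x j := fun hmem =>
      (Set.disjoint_left.mp (cell_disjoint j i hij.symm)) hmem (x_mem_cell hw hx i)
    obtain ⟨a, b, hA, haL, hbL, hpa, hpb⟩ :=
      cross (· ∈ cell A w x j) li hspi.1 c (x i) hspi.2.1 hspi.2.2.1 hcj hxi_not
    have hbi : b ∈ cell A w x i := by
      rcases hcovi b hbL with h | h
      · exact h
      · exact absurd h hpb
    refine ⟨b, hbi, a, hpa, ?_⟩
    rw [SimpleGraph.fromRel_adj]
    exact ⟨fun hEq => hpb (hEq.symm ▸ hpa), Or.inr hA⟩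

end Minor

lemma minor_mono {G : SimpleGraph V} {d e : ℕ} (hde : e ≤ d)
    (h : HasCompleteMinor G d) : HasCompleteMinor G e := by
  obtain ⟨B, h1, h2, h3, h4⟩ := h
  have hcast : Function.Injective (Fin.castLE hde) := Fin.castLE_injective hde
  exact ⟨B ∘ Fin.castLE hde, fun i => h1 _, fun i => h2 _,
    fun i j hij => h3 _ _ (fun hEq => hij (hcast hEq)),
    fun i j hij => h4 _ _ (fun hEq => hij (hcast hEq))⟩

end VCb

/-- If `G` is a `K_h`-minor-free directed graph (with positive real edge weights),
then the set system of directed balls `B_G = {B(v,r) : v ∈ V, r ∈ ℝ}`, where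
`B(v,r) = {u : d(v,u) ≤ r}`, has VC dimension at most `h − 1`. -/
theorem stmt_10 {V : Type*} [Fintype V] (A : V → V → Prop) (w : V → V → ℝ)
    (hw : ∀ a b, A a b → 0 < w a b) (h : ℕ)
    (hminor : ¬ HasCompleteMinor (SimpleGraph.fromRel A) h) :
    VCdim {S : Set V | ∃ (v : V) (r : ℝ), S = {u | ddist A w v u ≤ (r : EReal)}}
      ≤ h - 1 := by
  classical
  rcases Nat.eq_zero_or_pos h with rfl | hpos
  · exact absurd ⟨Fin.elim0, fun i => i.elim0, fun i => i.elim0,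
      fun i _ _ => i.elim0, fun i _ _ => i.elim0⟩ hminor
  unfold VCdim
  rcases Set.eq_empty_or_nonempty
    {d | ∃ A' : Finset V, A'.card = d ∧ VCShatters
      {S : Set V | ∃ (v : V) (r : ℝ), S = {u | ddist A w v u ≤ (r : EReal)}} ↑A'}
    with hS | hS
  · rw [hS, csSup_empty]; exact Nat.zero_le _
  apply csSup_le hS
  rintro n ⟨Afin, hcard, hsh⟩
  by_contra hn
  push_neg at hn
  have hhn : h ≤ n := by omega
  -- enumerate the shattered set
  set x : Fin n → V := fun i => (Afin.equivFin.symm (Fin.cast hcard.symm i) : V) with hxdef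
  have hxmem : ∀ i, x i ∈ Afin := fun i => (Afin.equivFin.symm (Fin.cast hcard.symm i)).2
  have hxinj : Function.Injective x := by
    intro i j hEq
    have h1 : Afin.equivFin.symm (Fin.cast hcard.symm i)
        = Afin.equivFin.symm (Fin.cast hcard.symm j) := Subtype.ext hEq
    have h2 := Afin.equivFin.symm.injective h1
    exact Fin.cast_injective _ h2
  have hball : ∀ i j : Fin n, i ≠ j → ∃ (c : V) (r : ℝ),
      ddist A w c (x i) ≤ ((r : ℝ) : EReal) ∧ ddist A w c (x j) ≤ ((r : ℝ) : EReal) ∧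
      ∀ k, k ≠ i → k ≠ j → ((r : ℝ) : EReal) < ddist A w c (x k) := by
    intro i j hij
    have hsub : ({x i, x j} : Set V) ⊆ ↑Afin := by
      rintro y hy
      rcases hy with rfl | hy
      · exact hxmem i
      · rw [Set.mem_singleton_iff] at hy; subst hy; exact hxmem j
    obtain ⟨S, hSmem, hScap⟩ := hsh {x i, x j} hsub
    obtain ⟨c, r, rfl⟩ := hSmem
    refine ⟨c, r, ?_, ?_, ?_⟩
    · have : x i ∈ (↑Afin : Set V) ∩ {u | ddist A w c u ≤ (r : EReal)} := by
        rw [hScap]; exact Set.mem_insert _ _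
      exact this.2
    · have : x j ∈ (↑Afin : Set V) ∩ {u | ddist A w c u ≤ (r : EReal)} := by
        rw [hScap]; exact Set.mem_insert_of_mem _ rfl
      exact this.2
    · intro k hki hkj
      by_contra hle
      push_neg at hle
      have : x k ∈ (↑Afin : Set V) ∩ {u | ddist A w c u ≤ (r : EReal)} :=
        ⟨hxmem k, hle⟩
      rw [hScap] at this
      rcases this with hEq | hEq
      · exact hki (hxinj hEq)
      · exact hkj (hxinj hEq)
  exact hminor (VCb.minor_mono hhn (VCb.shattered_minor hw hxinj hball))
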